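/- Let M be a finitely generated ℤ-graded R-module and h an integer, and let M(h) be the shifted graded module with M(h)_n = M_{n+h}. Then: (1) for every compact subset A ⊆ ℂ there exists a constant D such that for all y ∈ A and all n, |F_n(M(h),R,I,d)(y) − F_n(M,R,I,d)(y)| ≤ (D/p^n)·|F_n(M,R,I,d)(y)|; and (2) for every complex number y, the sequence (F_n(M,R,I,d)(y))_n converges if and only if (F_n(M(h),R,I,d)(y))_n converges, and when either converges the limits are equal. -/

import Mathlib

open Filter Complex

noncomputable section

/-- The Frobenius bracket power `I^{[q]}` of an ideal. -/
def bracketPow {R : Type*} [CommSemiring R] (I : Ideal R) (q : ℕ) : Ideal R :=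
  Ideal.span ((fun x : R => x ^ q) '' (I : Set R))

/-- `λ_k((M/N)_j)`. -/
def quotPieceDim (k : Type*) {R M : Type*} [Field k] [CommRing R] [Algebra k R]
    [AddCommGroup M] [Module R M] [Module k M] [IsScalarTower k R M]
    (ℳ : ℤ → Submodule k M) (N : Submodule R M) (j : ℤ) : ℕ :=
  Module.finrank k ((ℳ j).map (N.mkQ.restrictScalars k))

/-- `F_n(M,R,I,d)(y)`. -/
def FnGen (k : Type*) {R M : Type*} [Field k] [CommRing R] [Algebra k R]
    [AddCommGroup M] [Module R M] [Module k M] [IsScalarTower k R M]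
    (ℳ : ℤ → Submodule k M) (I : Ideal R) (p d n : ℕ) (y : ℂ) : ℂ :=
  (1 / (p : ℂ) ^ n) ^ d *
    ∑' j : ℤ, (quotPieceDim k (R := R) ℳ (bracketPow I (p ^ n) • ⊤) j : ℂ) *
      Complex.exp (-Complex.I * y * (j : ℂ) / (p : ℂ) ^ n)

lemma FnGen_shift (k : Type*) {R M : Type*} [Field k] [CommRing R] [Algebra k R]
    [AddCommGroup M] [Module R M] [Module k M] [IsScalarTower k R M]
    (ℳ : ℤ → Submodule k M) (I : Ideal R) (p d n : ℕ) (y : ℂ) (h : ℤ) :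
    FnGen k (R := R) (fun t : ℤ => ℳ (t + h)) I p d n y =
      Complex.exp (Complex.I * y * (h : ℂ) / (p : ℂ) ^ n) * FnGen k (R := R) ℳ I p d n y := by
  unfold FnGen
  set q : ℂ := (p : ℂ) ^ n with hq
  set N : Submodule R M := bracketPow I (p ^ n) • ⊤ with hN
  have key : (∑' j : ℤ, (quotPieceDim k (R := R) (fun t : ℤ => ℳ (t + h)) N j : ℂ) *
        Complex.exp (-Complex.I * y * (j : ℂ) / q))
      = Complex.exp (Complex.I * y * (h : ℂ) / q) *
        ∑' j : ℤ, (quotPieceDim k (R := R) ℳ N j : ℂ) *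
          Complex.exp (-Complex.I * y * (j : ℂ) / q) := by
    rw [← tsum_mul_left]
    have heq := (Equiv.addRight h).tsum_eq (fun j : ℤ =>
      Complex.exp (Complex.I * y * (h : ℂ) / q) * ((quotPieceDim k (R := R) ℳ N j : ℂ) *
        Complex.exp (-Complex.I * y * (j : ℂ) / q)))
    rw [← heq]
    apply tsum_congr
    intro j
    simp only [Equiv.coe_addRight]
    have hD : quotPieceDim k (R := R) (fun t : ℤ => ℳ (t + h)) N j
        = quotPieceDim k (R := R) ℳ N (j + h) := rfl
    have hexp : Complex.exp (Complex.I * y * (h : ℂ) / q) *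
        Complex.exp (-Complex.I * y * ((j + h : ℤ) : ℂ) / q)
        = Complex.exp (-Complex.I * y * (j : ℂ) / q) := by
      rw [← Complex.exp_add]
      congr 1
      push_cast
      ring
    rw [hD, ← hexp]
    ring
  rw [key]
  ring

lemma abs_exp_sub_one_le' (z : ℂ) (B : ℝ) (hz : ‖z‖ ≤ B) :
    ‖Complex.exp z - 1‖ ≤ (Real.exp B + 3) * ‖z‖ := by
  have h0 : 0 ≤ ‖z‖ := norm_nonneg z
  have hB0 : 0 < Real.exp B := Real.exp_pos B
  by_cases h1 : ‖z‖ ≤ 1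
  · have := Complex.norm_exp_sub_one_le h1
    nlinarith
  · push_neg at h1
    have h2 : ‖Complex.exp z - 1‖ ≤ ‖Complex.exp z‖ + 1 := by
      have := norm_sub_le (Complex.exp z) 1
      simpa using this
    have h3 : ‖Complex.exp z‖ = Real.exp z.re := Complex.norm_exp z
    have h4 : z.re ≤ B := le_trans (Complex.re_le_norm z) hz
    have h5 : Real.exp z.re ≤ Real.exp B := Real.exp_le_exp.mpr h4
    nlinarith

/-- **Invariance of the Frobenius–Poincaré limit under grading shifts.**  Let `M(h)`
denote `M` with the shifted grading `M(h)_n = M_{n+h}`.  Then (1) on every compact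
`A ⊆ ℂ` one has `|F_n(M(h),d)(y) - F_n(M,d)(y)| ≤ (D/pⁿ)|F_n(M,d)(y)|` for some
constant `D`, and (2) for each `y`, `F_n(M,d)(y)` and `F_n(M(h),d)(y)` converge
together, with the same limit. -/
theorem frobenius_poincare_shift_invariance
    (k R M : Type) [Field k] [CommRing R] [Algebra k R] [Algebra.FiniteType k R]
    (p : ℕ) (hp : p.Prime) [CharP R p]
    (𝒜 : ℤ → Submodule k R) [GradedAlgebra 𝒜]
    (h𝒜neg : ∀ t : ℤ, t < 0 → 𝒜 t = ⊥)
    (h𝒜zero : ∀ x ∈ 𝒜 0, ∃ c : k, algebraMap k R c = x)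
    (I : Ideal R) (hI : Ideal.IsHomogeneous 𝒜 I) (hIfl : IsFiniteLength R (R ⧸ I))
    [AddCommGroup M] [Module R M] [Module k M] [IsScalarTower k R M] [Module.Finite R M]
    (ℳ : ℤ → Submodule k M) [DirectSum.Decomposition ℳ]
    (hℳ : ∀ (a b : ℤ), ∀ r ∈ 𝒜 a, ∀ x ∈ ℳ b, r • x ∈ ℳ (a + b))
    (d : ℕ) (h : ℤ) :
    (∀ A : Set ℂ, IsCompact A → ∃ D : ℝ, ∀ y ∈ A, ∀ n : ℕ,
        ‖FnGen k (fun t : ℤ => ℳ (t + h)) I p d n y - FnGen k ℳ I p d n y‖ ≤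
          D / (p : ℝ) ^ n * ‖FnGen k ℳ I p d n y‖) ∧
    (∀ y : ℂ, ∀ L : ℂ,
        Tendsto (fun n : ℕ => FnGen k ℳ I p d n y) atTop (nhds L) ↔
        Tendsto (fun n : ℕ => FnGen k (fun t : ℤ => ℳ (t + h)) I p d n y) atTop (nhds L)) := by
  have hp1 : (1 : ℝ) ≤ (p : ℝ) := by exact_mod_cast hp.one_lt.le
  have hppos : (0 : ℝ) < (p : ℝ) := lt_of_lt_of_le one_pos hp1
  constructor
  · -- Part (1)
    intro A hA
    obtain ⟨C, hC⟩ := hA.isBounded.exists_norm_le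
    set C' : ℝ := max C 0 with hC'
    have hC'0 : 0 ≤ C' := le_max_right _ _
    set B : ℝ := C' * |(h : ℝ)| with hB
    have hB0 : 0 ≤ B := mul_nonneg hC'0 (abs_nonneg _)
    refine ⟨(Real.exp B + 3) * B, ?_⟩
    intro y hy n
    have hpn : (0 : ℝ) < (p : ℝ) ^ n := pow_pos hppos n
    have hpn1 : (1 : ℝ) ≤ (p : ℝ) ^ n := one_le_pow₀ hp1
    rw [FnGen_shift, ← sub_one_mul, norm_mul]
    set z : ℂ := Complex.I * y * (h : ℂ) / (p : ℂ) ^ n with hz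
    have habsz : ‖z‖ = ‖y‖ * |(h : ℝ)| / (p : ℝ) ^ n := by
      rw [hz, norm_div, norm_mul, norm_mul, Complex.norm_I, one_mul, norm_pow,
        Complex.norm_natCast, Complex.norm_intCast]
    have hyC : ‖y‖ ≤ C' := le_trans (hC y hy) (le_max_left _ _)
    have hzle : ‖z‖ ≤ B / (p : ℝ) ^ n := by
      rw [habsz, hB]
      gcongr
    have hzB : ‖z‖ ≤ B := hzle.trans (div_le_self hB0 hpn1)
    have hbound := abs_exp_sub_one_le' z B hzB
    have hfinal : ‖Complex.exp z - 1‖ ≤ (Real.exp B + 3) * B / (p : ℝ) ^ n := by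
      calc ‖Complex.exp z - 1‖ ≤ (Real.exp B + 3) * ‖z‖ := hbound
        _ ≤ (Real.exp B + 3) * (B / (p : ℝ) ^ n) := by
            apply mul_le_mul_of_nonneg_left hzle
            positivity
        _ = (Real.exp B + 3) * B / (p : ℝ) ^ n := by ring
    exact mul_le_mul_of_nonneg_right hfinal (norm_nonneg _)
  · -- Part (2)
    intro y L
    have hlim : Tendsto (fun n : ℕ => Complex.I * y * (h : ℂ) / (p : ℂ) ^ n) atTop (nhds 0) := by
      have h1 : Tendsto (fun n : ℕ => ((p : ℂ)⁻¹) ^ n) atTop (nhds 0) := by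
        apply tendsto_pow_atTop_nhds_zero_of_norm_lt_one
        rw [norm_inv, Complex.norm_natCast]
        rw [inv_lt_one_iff₀]
        right; exact_mod_cast hp.one_lt
      have := h1.const_mul (Complex.I * y * (h : ℂ))
      simpa [div_eq_mul_inv, inv_pow] using this
    have he1 : Tendsto (fun n : ℕ => Complex.exp (Complex.I * y * (h : ℂ) / (p : ℂ) ^ n))
        atTop (nhds 1) := by
      have := (Complex.continuous_exp.tendsto 0).comp hlim
      simpa [Function.comp_def] using this
    have he2 : Tendsto (fun n : ℕ => Complex.exp (-(Complex.I * y * (h : ℂ) / (p : ℂ) ^ n)))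
        atTop (nhds 1) := by
      have := (Complex.continuous_exp.tendsto 0).comp (by simpa using hlim.neg)
      simpa [Function.comp_def] using this
    constructor
    · intro hF
      have : Tendsto (fun n : ℕ => Complex.exp (Complex.I * y * (h : ℂ) / (p : ℂ) ^ n) *
          FnGen k ℳ I p d n y) atTop (nhds (1 * L)) := he1.mul hF
      rw [one_mul] at this
      convert this using 2 with n
      exact FnGen_shift k ℳ I p d n y h
    · intro hF'
      have heq : ∀ n : ℕ, FnGen k ℳ I p d n y
          = Complex.exp (-(Complex.I * y * (h : ℂ) / (p : ℂ) ^ n)) *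
            FnGen k (fun t : ℤ => ℳ (t + h)) I p d n y := by
        intro n
        rw [FnGen_shift, ← mul_assoc, ← Complex.exp_add, neg_add_cancel, Complex.exp_zero,
          one_mul]
      have : Tendsto (fun n : ℕ => Complex.exp (-(Complex.I * y * (h : ℂ) / (p : ℂ) ^ n)) *
          FnGen k (fun t : ℤ => ℳ (t + h)) I p d n y) atTop (nhds (1 * L)) := he2.mul hF'
      rw [one_mul] at this
      convert this using 2 with n
      exact heq n


end
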